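/- arXiv:2508.06935 — 2 statements merged into one kernel-verified Lean document; each statement's English description precedes it below -/
import Mathlib

section
/- Let ℋ = (𝒰, ℱ, 𝒰*) be a history graph for (o,T) for the j-neighbour Bootstrap Percolation. Then, as an inequality of real numbers, 2·(Φ_E(G) − j + 1)·|𝒰| + δ − Φ_E(G) ≤ (Φ_E(G) + Δ − 2j + 2)·|𝒰*|. -/
open Classical
noncomputable section

namespace Paper

variable {V : Type*}

/-- Number of neighbours of `x` whose value is `1` (`true`). -/
def cCount (G : SimpleGraph V) [DecidableRel G.Adj] [∀ v, Fintype (G.neighborSet v)]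
    (η : V → Bool) (x : V) : ℕ :=
  ((G.neighborFinset x).filter fun y => η y = true).card

/-- The `j`-neighbour Bootstrap Percolation with noise set `N` and initial configuration `ξ`. -/
noncomputable def bootstrapPerc (G : SimpleGraph V) [DecidableRel G.Adj]
    [∀ v, Fintype (G.neighborSet v)] (j : ℕ) (N : Set (V × ℕ)) (ξ : V → Bool) :
    ℕ → V → Bool
  | 0 => ξ
  | t + 1 => fun x =>
      if (x, t + 1) ∈ N then false
      else bootstrapPerc G j N ξ t x || decide (j ≤ cCount G (bootstrapPerc G j N ξ t) x)

/-- The `j`-threshold Consensus Process with noise set `N` and initial configuration `ξ`. -/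
noncomputable def consensus (G : SimpleGraph V) [DecidableRel G.Adj]
    [∀ v, Fintype (G.neighborSet v)] (j : ℕ) (N : Set (V × ℕ)) (ξ : V → Bool) :
    ℕ → V → Bool
  | 0 => ξ
  | t + 1 => fun x =>
      if (x, t + 1) ∈ N then false
      else decide (j ≤ cCount G (consensus G j N ξ t) x)

/-- `∂_E K`: number of edges with exactly one endpoint in `K`. -/
def edgeBoundaryCard (G : SimpleGraph V) [DecidableRel G.Adj]
    [∀ v, Fintype (G.neighborSet v)] (K : Finset V) : ℕ :=
  ∑ x ∈ K, ((G.neighborFinset x).filter fun y => y ∉ K).card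

/-- The edge expansion constant `Φ_E(G)`. -/
noncomputable def edgeExpansion (G : SimpleGraph V) [DecidableRel G.Adj]
    [∀ v, Fintype (G.neighborSet v)] : ℝ :=
  sInf {r : ℝ | ∃ K : Finset V, K.Nonempty ∧ r = (edgeBoundaryCard G K : ℝ) / (K.card : ℝ)}

/-- `∂_V K`: number of vertices outside `K` adjacent to a vertex of `K`. -/
def vertexBoundaryCard [DecidableEq V] (G : SimpleGraph V) [DecidableRel G.Adj]
    [∀ v, Fintype (G.neighborSet v)] (K : Finset V) : ℕ :=
  ((K.biUnion fun x => G.neighborFinset x) \ K).card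

/-- The vertex expansion constant `Φ_V(G)`. -/
noncomputable def vertexExpansion [DecidableEq V] (G : SimpleGraph V) [DecidableRel G.Adj]
    [∀ v, Fintype (G.neighborSet v)] : ℝ :=
  sInf {r : ℝ | ∃ K : Finset V, K.Nonempty ∧ r = (vertexBoundaryCard G K : ℝ) / (K.card : ℝ)}

/-- A history graph `(𝒰, ℱ, 𝒰*)` for `(o, T)`.  If `bp = true` it is a history graph for the
`j`-neighbour Bootstrap Percolation (one outgoing straight edge and `deg x − j + 1` outgoing
oblique edges at every vertex of `𝒰 \ 𝒰*`); if `bp = false` it is a history graph for the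
`j`-threshold Consensus Process (no straight edges and `deg x − j + 1` outgoing oblique edges). -/
structure HistoryGraph (G : SimpleGraph V) [DecidableRel G.Adj]
    [∀ v, Fintype (G.neighborSet v)] (j : ℕ) (o : V) (T : ℕ) (bp : Bool) where
  U : Finset (V × ℕ)
  F : Finset ((V × ℕ) × (V × ℕ))
  Ustar : Finset (V × ℕ)
  ustar_subset : Ustar ⊆ U
  edge_mem_fst : ∀ e ∈ F, e.1 ∈ U
  edge_mem_snd : ∀ e ∈ F, e.2 ∈ U
  edge_time : ∀ e ∈ F, e.1.2 = e.2.2 + 1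
  edge_space : ∀ e ∈ F, e.1.1 = e.2.1 ∨ G.Adj e.1.1 e.2.1
  conn : ∀ u ∈ U, ∀ v ∈ U,
    Relation.ReflTransGen (fun a b => (a, b) ∈ F ∨ (b, a) ∈ F) u v
  root_mem : (o, T) ∈ U
  time_range : ∀ u ∈ U, u ≠ (o, T) → 1 ≤ u.2 ∧ u.2 ≤ T
  time_one_star : ∀ u ∈ U, u.2 = 1 → u ∈ Ustar
  star_no_out : ∀ u ∈ Ustar, ∀ e ∈ F, e.1 ≠ u
  straight_count : ∀ u ∈ U, u ∉ Ustar →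
      (F.filter fun e => e.1 = u ∧ e.2.1 = u.1).card = cond bp 1 0
  oblique_count : ∀ u ∈ U, u ∉ Ustar →
      (F.filter fun e => e.1 = u ∧ e.2.1 ≠ u.1).card = G.degree u.1 + 1 - j

/-- The strong product `G ⊠ ℕ`. -/
def strongProd (G : SimpleGraph V) : SimpleGraph (V × ℕ) where
  Adj p q := p ≠ q ∧ (p.2 ≤ q.2 + 1 ∧ q.2 ≤ p.2 + 1) ∧ (p.1 = q.1 ∨ G.Adj p.1 q.1)
  symm := by
    refine ⟨?_⟩
    rintro p q ⟨h1, ⟨h2, h3⟩, h4⟩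
    exact ⟨h1.symm, ⟨h3, h2⟩, h4.elim (fun e => Or.inl e.symm) fun a => Or.inr a.symm⟩
  loopless := ⟨fun p h => h.1 rfl⟩

/-- The connected component of `p` in the subgraph of `G ⊠ ℕ` induced by `Z`. -/
def cluster (G : SimpleGraph V) (Z : Set (V × ℕ)) (p : V × ℕ) : Set (V × ℕ) :=
  {q | p ∈ Z ∧ q ∈ Z ∧
    Relation.ReflTransGen (fun a b => a ∈ Z ∧ b ∈ Z ∧ (strongProd G).Adj a b) p q}

/-- The witness-root property defining `j ≤ j̄`. -/
def radialGood (G : SimpleGraph V) [DecidableRel G.Adj] [∀ v, Fintype (G.neighborSet v)]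
    (j : ℕ) : Prop :=
  ∃ r : V, ∀ x : V,
    j ≤ ((G.neighborFinset x).filter fun y => G.dist r y = G.dist r x + 1).card

end Paper

section AuxProof

open Paper

variable {V : Type*} (G : SimpleGraph V) [DecidableRel G.Adj] [∀ v, Fintype (G.neighborSet v)]

lemma aux_edgeExpansion_nonneg : 0 ≤ edgeExpansion G := by
  apply Real.sInf_nonneg
  rintro r ⟨K, hK, rfl⟩
  positivity

lemma aux_bddBelow : BddBelow {r : ℝ | ∃ K : Finset V, K.Nonempty ∧
    r = (edgeBoundaryCard G K : ℝ) / (K.card : ℝ)} := by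
  refine ⟨0, ?_⟩
  rintro r ⟨K, hK, rfl⟩
  positivity

lemma aux_expansion_mul_card_le (K : Finset V) :
    edgeExpansion G * K.card ≤ (edgeBoundaryCard G K : ℝ) := by
  rcases K.eq_empty_or_nonempty with h | h
  · subst h
    simp [edgeBoundaryCard]
  · have hmem : (edgeBoundaryCard G K : ℝ) / (K.card : ℝ) ∈
        {r : ℝ | ∃ K : Finset V, K.Nonempty ∧ r = (edgeBoundaryCard G K : ℝ) / (K.card : ℝ)} :=
      ⟨K, h, rfl⟩
    have h1 := csInf_le (aux_bddBelow G) hmem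
    have hc : (0:ℝ) < (K.card : ℝ) := by exact_mod_cast h.card_pos
    exact (le_div_iff₀ hc).mp h1

lemma aux_expansion_le_degree (x : V) : edgeExpansion G ≤ (G.degree x : ℝ) := by
  have hK : (edgeBoundaryCard G {x} : ℝ) = (G.degree x : ℝ) := by
    have hf : (G.neighborFinset x).filter (fun y => y ∉ ({x} : Finset V)) = G.neighborFinset x :=
      Finset.filter_true_of_mem (fun y hy => by
        rw [SimpleGraph.mem_neighborFinset] at hy
        simp only [Finset.mem_singleton]
        exact hy.ne')
    have : edgeBoundaryCard G {x} = G.degree x := by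
      unfold edgeBoundaryCard
      rw [Finset.sum_singleton, hf, SimpleGraph.card_neighborFinset_eq_degree]
    exact_mod_cast this
  have hmem : (edgeBoundaryCard G {x} : ℝ) / (({x} : Finset V).card : ℝ) ∈
      {r : ℝ | ∃ K : Finset V, K.Nonempty ∧ r = (edgeBoundaryCard G K : ℝ) / (K.card : ℝ)} :=
    ⟨{x}, Finset.singleton_nonempty x, rfl⟩
  have h1 : edgeExpansion G ≤ (edgeBoundaryCard G {x} : ℝ) / (({x} : Finset V).card : ℝ) :=
    csInf_le (aux_bddBelow G) hmem
  simpa [hK] using h1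

lemma aux_level (j : ℕ) (K W : Finset V) (hWK : W ⊆ K)
    (hext : ∀ x ∈ W, ((G.neighborFinset x).filter fun y => y ∉ K).card ≤ j - 1) :
    edgeBoundaryCard G K + edgeBoundaryCard G W ≤
      (∑ x ∈ K \ W, G.degree x) + 2 * ((j - 1) * W.card) := by
  classical
  have hswap : ∀ (A : Finset V) (y : V),
      ((G.neighborFinset y).filter fun z => z ∈ A).card = (A.filter fun z => G.Adj y z).card := by
    intro A y
    have he : (G.neighborFinset y).filter (fun z => z ∈ A) = A.filter (fun z => G.Adj y z) := by
      ext z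
      simp only [Finset.mem_filter, SimpleGraph.mem_neighborFinset]
      exact ⟨fun h => ⟨h.2, h.1⟩, fun h => ⟨h.2, h.1⟩⟩
    rw [he]
  have hdc : (∑ x ∈ W, ((K \ W).filter fun y => G.Adj x y).card)
      = ∑ y ∈ K \ W, (W.filter fun x => G.Adj x y).card := by
    simp only [Finset.card_filter]
    exact Finset.sum_comm
  have h3 : ∀ x ∈ W, ((G.neighborFinset x).filter fun y => y ∉ W).card ≤
      ((G.neighborFinset x).filter fun y => y ∉ K).card +
      ((K \ W).filter fun y => G.Adj x y).card := by
    intro x hx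
    rw [← hswap (K \ W) x]
    have hss : (G.neighborFinset x).filter (fun y => y ∉ W) ⊆
        ((G.neighborFinset x).filter fun y => y ∉ K) ∪
        ((G.neighborFinset x).filter fun y => y ∈ K \ W) := by
      intro y hy
      rw [Finset.mem_filter] at hy
      rw [Finset.mem_union, Finset.mem_filter, Finset.mem_filter, Finset.mem_sdiff]
      by_cases hyK : y ∈ K
      · exact Or.inr ⟨hy.1, hyK, hy.2⟩
      · exact Or.inl ⟨hy.1, hyK⟩
    exact le_trans (Finset.card_le_card hss) (Finset.card_union_le _ _)
  have h5 : ∀ y ∈ K \ W, ((G.neighborFinset y).filter fun z => z ∉ K).card +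
      (W.filter fun x => G.Adj x y).card ≤ G.degree y := by
    intro y hy
    have e1 : (W.filter fun x => G.Adj x y) = (W.filter fun z => G.Adj y z) := by
      ext z
      simp only [Finset.mem_filter]
      exact ⟨fun h => ⟨h.1, h.2.symm⟩, fun h => ⟨h.1, h.2.symm⟩⟩
    rw [e1, ← hswap W y]
    have hdisj : Disjoint ((G.neighborFinset y).filter fun z => z ∉ K)
        ((G.neighborFinset y).filter fun z => z ∈ W) := by
      rw [Finset.disjoint_left]
      intro z hz1 hz2
      rw [Finset.mem_filter] at hz1 hz2
      exact hz1.2 (hWK hz2.2)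
    calc ((G.neighborFinset y).filter fun z => z ∉ K).card +
        ((G.neighborFinset y).filter fun z => z ∈ W).card
        = (((G.neighborFinset y).filter fun z => z ∉ K) ∪
           ((G.neighborFinset y).filter fun z => z ∈ W)).card :=
          (Finset.card_union_of_disjoint hdisj).symm
      _ ≤ (G.neighborFinset y).card := Finset.card_le_card
          (Finset.union_subset (Finset.filter_subset _ _) (Finset.filter_subset _ _))
      _ = G.degree y := G.card_neighborFinset_eq_degree y
  have hKsplit : edgeBoundaryCard G K =
      (∑ x ∈ K \ W, ((G.neighborFinset x).filter fun y => y ∉ K).card) +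
      ∑ x ∈ W, ((G.neighborFinset x).filter fun y => y ∉ K).card := by
    unfold edgeBoundaryCard
    exact (Finset.sum_sdiff hWK).symm
  have hWb : edgeBoundaryCard G W ≤
      (∑ x ∈ W, ((G.neighborFinset x).filter fun y => y ∉ K).card) +
      ∑ x ∈ W, ((K \ W).filter fun y => G.Adj x y).card := by
    unfold edgeBoundaryCard
    rw [← Finset.sum_add_distrib]
    exact Finset.sum_le_sum h3
  have h2' : (∑ x ∈ W, ((G.neighborFinset x).filter fun y => y ∉ K).card) ≤ (j - 1) * W.card := by
    calc (∑ x ∈ W, ((G.neighborFinset x).filter fun y => y ∉ K).card)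
        ≤ ∑ _x ∈ W, (j - 1) := Finset.sum_le_sum hext
      _ = (j - 1) * W.card := by rw [Finset.sum_const, smul_eq_mul, mul_comm]
  have hPQ : (∑ y ∈ K \ W, ((G.neighborFinset y).filter fun z => z ∉ K).card) +
      (∑ y ∈ K \ W, (W.filter fun x => G.Adj x y).card) ≤ ∑ x ∈ K \ W, G.degree x := by
    rw [← Finset.sum_add_distrib]
    exact Finset.sum_le_sum h5
  calc edgeBoundaryCard G K + edgeBoundaryCard G W
      ≤ ((∑ x ∈ K \ W, ((G.neighborFinset x).filter fun y => y ∉ K).card) +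
         ∑ x ∈ W, ((G.neighborFinset x).filter fun y => y ∉ K).card) +
        ((∑ x ∈ W, ((G.neighborFinset x).filter fun y => y ∉ K).card) +
         ∑ x ∈ W, ((K \ W).filter fun y => G.Adj x y).card) := by
        rw [hKsplit]
        exact Nat.add_le_add_left hWb _
    _ = ((∑ x ∈ K \ W, ((G.neighborFinset x).filter fun y => y ∉ K).card) +
         (∑ y ∈ K \ W, (W.filter fun x => G.Adj x y).card)) +
        ((∑ x ∈ W, ((G.neighborFinset x).filter fun y => y ∉ K).card) +
         ∑ x ∈ W, ((G.neighborFinset x).filter fun y => y ∉ K).card) := by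
        rw [← hdc]
        ring
    _ ≤ (∑ x ∈ K \ W, G.degree x) + ((j - 1) * W.card + (j - 1) * W.card) :=
        Nat.add_le_add hPQ (Nat.add_le_add h2' h2')
    _ = (∑ x ∈ K \ W, G.degree x) + 2 * ((j - 1) * W.card) := by ring

end AuxProof

open Paper in
/-- the improved history-graph inequality (Lemma 4.5, ineq. (4.4)) for
Bootstrap Percolation. -/
theorem historyGraph_edge_expansion_inequality_BP
    {V : Type*} [Infinite V]
    (G : SimpleGraph V) [DecidableRel G.Adj] [∀ v, Fintype (G.neighborSet v)]
    (hconn : G.Connected)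
    (Δ : ℕ) (hΔ : IsLUB (Set.range fun x => G.degree x) Δ)
    (δ : ℕ) (hδ : IsGLB (Set.range fun x => G.degree x) δ)
    (j : ℕ) (hj1 : 1 ≤ j) (hjδ : j ≤ δ)
    (o : V) (T : ℕ) (H : HistoryGraph G j o T true) :
    2 * (edgeExpansion G - j + 1) * H.U.card + δ - edgeExpansion G ≤
      (edgeExpansion G + Δ - 2 * j + 2) * H.Ustar.card := by
  classical
  obtain ⟨x₀⟩ : Nonempty V := inferInstance
  have hdegΔ : ∀ x : V, G.degree x ≤ Δ := fun x => hΔ.1 ⟨x, rfl⟩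
  have hδdeg : ∀ x : V, δ ≤ G.degree x := fun x => hδ.1 ⟨x, rfl⟩
  have hδΔ : δ ≤ Δ := le_trans (hδdeg x₀) (hdegΔ x₀)
  have hjdeg : ∀ x : V, j ≤ G.degree x := fun x => le_trans hjδ (hδdeg x)
  have hΦ0 : 0 ≤ edgeExpansion G := aux_edgeExpansion_nonneg G
  have hΦδ : edgeExpansion G ≤ (δ : ℝ) := by
    have hrange : (Set.range fun x : V => G.degree x).Nonempty := Set.range_nonempty _
    have hmem : δ ∈ Set.range fun x : V => G.degree x := by
      have h := Nat.sInf_mem hrange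
      rwa [hδ.csInf_eq hrange] at h
    obtain ⟨y, hy⟩ := hmem
    have hy' : G.degree y = δ := hy
    have h := aux_expansion_le_degree G y
    rw [hy'] at h
    exact h
  -- structural facts about the history graph
  have hstraight : ∀ u ∈ H.U, u ∉ H.Ustar → 1 ≤ u.2 ∧ (u.1, u.2 - 1) ∈ H.U := by
    intro u hu hus
    have hc : (H.F.filter fun e => e.1 = u ∧ e.2.1 = u.1).card = 1 := H.straight_count u hu hus
    have hpos : 0 < (H.F.filter fun e => e.1 = u ∧ e.2.1 = u.1).card := by omega
    obtain ⟨e, he⟩ := Finset.card_pos.mp hpos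
    rw [Finset.mem_filter] at he
    obtain ⟨heF, he1, he2⟩ := he
    have ht := H.edge_time e heF
    rw [he1] at ht
    refine ⟨by omega, ?_⟩
    have he2' : e.2 = (u.1, u.2 - 1) := Prod.ext_iff.mpr ⟨he2, by omega⟩
    rw [← he2']
    exact H.edge_mem_snd e heF
  have hoblique : ∀ u ∈ H.U, u ∉ H.Ustar →
      G.degree u.1 + 1 - j ≤ ((G.neighborFinset u.1).filter fun y => (y, u.2 - 1) ∈ H.U).card := by
    intro u hu hus
    rw [← H.oblique_count u hu hus]
    apply Finset.card_le_card_of_injOn (fun e => e.2.1)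
    · intro e he
      rw [Finset.mem_coe, Finset.mem_filter] at he
      obtain ⟨heF, he1, he2⟩ := he
      have ht := H.edge_time e heF
      have hsp := H.edge_space e heF
      rw [he1] at ht hsp
      rw [Finset.mem_coe, Finset.mem_filter, SimpleGraph.mem_neighborFinset]
      refine ⟨?_, ?_⟩
      · rcases hsp with h | h
        · exact absurd h.symm he2
        · exact h
      · have he2' : e.2 = (e.2.1, u.2 - 1) := Prod.ext_iff.mpr ⟨rfl, by omega⟩
        rw [← he2']
        exact H.edge_mem_snd e heF
    · intro e he e' he' hee
      simp only [Finset.coe_filter, Set.mem_setOf_eq] at he he'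
      have ht := H.edge_time e he.1
      have ht' := H.edge_time e' he'.1
      rw [he.2.1] at ht
      rw [he'.2.1] at ht'
      have h2 : e.2 = e'.2 := Prod.ext_iff.mpr ⟨hee, by omega⟩
      have h1 : e.1 = e'.1 := by rw [he.2.1, he'.2.1]
      exact Prod.ext_iff.mpr ⟨h1, h2⟩
  -- level sets
  set Kt : ℕ → Finset V := fun t => (H.U.filter fun u => u.2 = t).image Prod.fst with hKtdef
  set Wt : ℕ → Finset V :=
    fun t => ((H.U \ H.Ustar).filter fun u => u.2 = t + 1).image Prod.fst with hWtdef
  have hmemK : ∀ (t : ℕ) (x : V), x ∈ Kt t ↔ (x, t) ∈ H.U := by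
    intro t x
    simp only [hKtdef, Finset.mem_image, Finset.mem_filter]
    constructor
    · rintro ⟨u, ⟨hu, ht⟩, rfl⟩
      have he : u = (u.1, t) := Prod.ext_iff.mpr ⟨rfl, ht⟩
      rwa [he] at hu
    · intro h
      exact ⟨(x, t), ⟨h, rfl⟩, rfl⟩
  have hmemW : ∀ (t : ℕ) (x : V), x ∈ Wt t ↔ ((x, t + 1) ∈ H.U ∧ (x, t + 1) ∉ H.Ustar) := by
    intro t x
    simp only [hWtdef, Finset.mem_image, Finset.mem_filter, Finset.mem_sdiff]
    constructor
    · rintro ⟨u, ⟨⟨hu, hus⟩, ht⟩, rfl⟩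
      have he : u = (u.1, t + 1) := Prod.ext_iff.mpr ⟨rfl, ht⟩
      rw [he] at hu hus
      exact ⟨hu, hus⟩
    · intro h
      exact ⟨(x, t + 1), ⟨⟨h.1, h.2⟩, rfl⟩, rfl⟩
  have hWK : ∀ t, Wt t ⊆ Kt t := by
    intro t x hx
    rw [hmemW] at hx
    rw [hmemK]
    have h := (hstraight (x, t + 1) hx.1 hx.2).2
    simpa using h
  have hWext : ∀ t, ∀ x ∈ Wt t,
      ((G.neighborFinset x).filter fun y => y ∉ Kt t).card ≤ j - 1 := by
    intro t x hx
    rw [hmemW] at hx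
    have hob : G.degree x + 1 - j ≤
        ((G.neighborFinset x).filter fun y => (y, t) ∈ H.U).card := by
      simpa using hoblique (x, t + 1) hx.1 hx.2
    have hsub : (G.neighborFinset x).filter (fun y => (y, t) ∈ H.U) ⊆
        (G.neighborFinset x).filter (fun y => y ∈ Kt t) := by
      intro y hy
      rw [Finset.mem_filter] at hy ⊢
      exact ⟨hy.1, (hmemK t y).mpr hy.2⟩
    have h1 : G.degree x + 1 - j ≤ ((G.neighborFinset x).filter (fun y => y ∈ Kt t)).card :=
      le_trans hob (Finset.card_le_card hsub)
    have h2 := Finset.card_filter_add_card_filter_not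
      (s := G.neighborFinset x) (p := fun y => y ∈ Kt t)
    have h3 : (G.neighborFinset x).card = G.degree x := G.card_neighborFinset_eq_degree x
    have h4 := hjdeg x
    omega
  have hlevel : ∀ t, edgeBoundaryCard G (Kt t) + edgeBoundaryCard G (Wt t) ≤
      (∑ x ∈ Kt t \ Wt t, G.degree x) + 2 * ((j - 1) * (Wt t).card) :=
    fun t => aux_level G j (Kt t) (Wt t) (hWK t) (hWext t)
  -- cardinalities
  have hKcard : ∀ t, (Kt t).card = (H.U.filter fun u => u.2 = t).card := by
    intro t
    simp only [hKtdef]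
    apply Finset.card_image_of_injOn
    intro u hu v hv huv
    rw [Finset.mem_coe, Finset.mem_filter] at hu hv
    exact Prod.ext_iff.mpr ⟨huv, by rw [hu.2, hv.2]⟩
  have hWcard : ∀ t, (Wt t).card = ((H.U \ H.Ustar).filter fun u => u.2 = t + 1).card := by
    intro t
    simp only [hWtdef]
    apply Finset.card_image_of_injOn
    intro u hu v hv huv
    rw [Finset.mem_coe, Finset.mem_filter] at hu hv
    exact Prod.ext_iff.mpr ⟨huv, by rw [hu.2, hv.2]⟩
  have htT : ∀ u ∈ H.U, u.2 ≤ T := by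
    intro u hu
    by_cases h : u = (o, T)
    · rw [h]
    · exact (H.time_range u hu h).2
  have hsumA : (∑ t ∈ Finset.range T, (Kt t).card) + (H.U.filter fun u => u.2 = T).card
      = H.U.card := by
    have h := Finset.card_eq_sum_card_fiberwise
      (f := Prod.snd) (s := H.U) (t := Finset.range (T + 1))
      (fun u hu => Finset.mem_range.mpr (Nat.lt_succ_of_le (htT u hu)))
    rw [Finset.sum_range_succ] at h
    rw [Finset.sum_congr rfl (fun t _ => hKcard t)]
    exact h.symm
  have hsdiffcount : (H.U \ H.Ustar).card + H.Ustar.card = H.U.card :=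
    Finset.card_sdiff_add_card_eq_card H.ustar_subset
  have hsumB : (∑ t ∈ Finset.range T, (Wt t).card) = (H.U \ H.Ustar).card := by
    have hmem : ∀ u ∈ H.U \ H.Ustar, u.2 - 1 ∈ Finset.range T := by
      intro u hu
      rw [Finset.mem_sdiff] at hu
      have h1 := (hstraight u hu.1 hu.2).1
      have h2 := htT u hu.1
      exact Finset.mem_range.mpr (by omega)
    have h := Finset.card_eq_sum_card_fiberwise (f := fun u => u.2 - 1)
      (s := H.U \ H.Ustar) (t := Finset.range T) (fun u hu => hmem u hu)
    rw [h]
    refine Finset.sum_congr rfl fun t ht => ?_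
    rw [hWcard t]
    refine congrArg Finset.card (Finset.filter_congr ?_)
    intro u hu
    rw [Finset.mem_sdiff] at hu
    have h1 := (hstraight u hu.1 hu.2).1
    show u.2 = t + 1 ↔ u.2 - 1 = t
    omega
  have hsumC : (∑ t ∈ Finset.range T, ((Kt t) \ (Wt t)).card) +
      (∑ t ∈ Finset.range T, (Wt t).card) = ∑ t ∈ Finset.range T, (Kt t).card := by
    rw [← Finset.sum_add_distrib]
    exact Finset.sum_congr rfl fun t _ => Finset.card_sdiff_add_card_eq_card (hWK t)
  have hnT1 : 1 ≤ (H.U.filter fun u => u.2 = T).card :=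
    Finset.card_pos.mpr ⟨(o, T), Finset.mem_filter.mpr ⟨H.root_mem, rfl⟩⟩
  -- global counting inequality over ℕ
  have hglobal : (∑ t ∈ Finset.range T, edgeBoundaryCard G (Kt t)) +
      (∑ t ∈ Finset.range T, edgeBoundaryCard G (Wt t)) ≤
      (∑ t ∈ Finset.range T, ((Kt t) \ (Wt t)).card) * Δ +
      2 * ((j - 1) * (∑ t ∈ Finset.range T, (Wt t).card)) := by
    have hR : (∑ t ∈ Finset.range T, ((Kt t) \ (Wt t)).card) * Δ +
        2 * ((j - 1) * (∑ t ∈ Finset.range T, (Wt t).card)) =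
        ∑ t ∈ Finset.range T, (((Kt t) \ (Wt t)).card * Δ + 2 * ((j - 1) * (Wt t).card)) := by
      rw [Finset.sum_add_distrib, Finset.sum_mul, Finset.mul_sum, Finset.mul_sum]
    rw [hR, ← Finset.sum_add_distrib]
    apply Finset.sum_le_sum
    intro t _
    have hdeg : (∑ x ∈ Kt t \ Wt t, G.degree x) ≤ ((Kt t) \ (Wt t)).card * Δ := by
      calc (∑ x ∈ Kt t \ Wt t, G.degree x) ≤ ∑ _x ∈ Kt t \ Wt t, Δ :=
          Finset.sum_le_sum fun x _ => hdegΔ x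
        _ = ((Kt t) \ (Wt t)).card * Δ := by rw [Finset.sum_const, smul_eq_mul]
    exact le_trans (hlevel t) (Nat.add_le_add_right hdeg _)
  -- pass to ℝ
  have hexpK : edgeExpansion G * ((∑ t ∈ Finset.range T, (Kt t).card : ℕ) : ℝ) ≤
      ((∑ t ∈ Finset.range T, edgeBoundaryCard G (Kt t) : ℕ) : ℝ) := by
    rw [Nat.cast_sum, Nat.cast_sum, Finset.mul_sum]
    exact Finset.sum_le_sum fun t _ => aux_expansion_mul_card_le G (Kt t)
  have hexpW : edgeExpansion G * ((∑ t ∈ Finset.range T, (Wt t).card : ℕ) : ℝ) ≤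
      ((∑ t ∈ Finset.range T, edgeBoundaryCard G (Wt t) : ℕ) : ℝ) := by
    rw [Nat.cast_sum, Nat.cast_sum, Finset.mul_sum]
    exact Finset.sum_le_sum fun t _ => aux_expansion_mul_card_le G (Wt t)
  have hgR : ((∑ t ∈ Finset.range T, edgeBoundaryCard G (Kt t) : ℕ) : ℝ) +
      ((∑ t ∈ Finset.range T, edgeBoundaryCard G (Wt t) : ℕ) : ℝ) ≤
      ((∑ t ∈ Finset.range T, ((Kt t) \ (Wt t)).card : ℕ) : ℝ) * (Δ : ℝ) +
      2 * (((j : ℝ) - 1) * ((∑ t ∈ Finset.range T, (Wt t).card : ℕ) : ℝ)) := by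
    have hcast := (Nat.cast_le (α := ℝ)).mpr hglobal
    rw [Nat.cast_add, Nat.cast_add, Nat.cast_mul, Nat.cast_mul, Nat.cast_mul,
      Nat.cast_sub hj1, Nat.cast_one, Nat.cast_ofNat] at hcast
    exact hcast
  -- cast identities
  have hc1 : ((∑ t ∈ Finset.range T, (Kt t).card : ℕ) : ℝ) =
      (H.U.card : ℝ) - ((H.U.filter fun u => u.2 = T).card : ℝ) := by
    have h' : ((∑ t ∈ Finset.range T, (Kt t).card : ℕ) : ℝ) +
        ((H.U.filter fun u => u.2 = T).card : ℝ) = (H.U.card : ℝ) := by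
      exact_mod_cast hsumA
    linarith
  have hc2 : ((∑ t ∈ Finset.range T, (Wt t).card : ℕ) : ℝ) =
      (H.U.card : ℝ) - (H.Ustar.card : ℝ) := by
    have hnat : (∑ t ∈ Finset.range T, (Wt t).card) + H.Ustar.card = H.U.card := by
      rw [hsumB]; exact hsdiffcount
    have h' : ((∑ t ∈ Finset.range T, (Wt t).card : ℕ) : ℝ) + (H.Ustar.card : ℝ)
        = (H.U.card : ℝ) := by exact_mod_cast hnat
    linarith
  have hc3 : ((∑ t ∈ Finset.range T, ((Kt t) \ (Wt t)).card : ℕ) : ℝ) =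
      (H.Ustar.card : ℝ) - ((H.U.filter fun u => u.2 = T).card : ℝ) := by
    have h' : ((∑ t ∈ Finset.range T, ((Kt t) \ (Wt t)).card : ℕ) : ℝ) +
        ((∑ t ∈ Finset.range T, (Wt t).card : ℕ) : ℝ) =
        ((∑ t ∈ Finset.range T, (Kt t).card : ℕ) : ℝ) := by exact_mod_cast hsumC
    rw [hc1, hc2] at h'
    linarith
  rw [hc1] at hexpK
  rw [hc2] at hexpW
  rw [hc3, hc2] at hgR
  -- special inequality at level T
  have h3 : edgeExpansion G * ((H.U.filter fun u => u.2 = T).card : ℝ) + (δ : ℝ) -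
      edgeExpansion G ≤ (Δ : ℝ) * ((H.U.filter fun u => u.2 = T).card : ℝ) := by
    have h1 : (1 : ℝ) ≤ ((H.U.filter fun u => u.2 = T).card : ℝ) := by exact_mod_cast hnT1
    have h2 : (δ : ℝ) ≤ (Δ : ℝ) := by exact_mod_cast hδΔ
    have e1 : (0:ℝ) ≤ ((δ : ℝ) - edgeExpansion G) *
        (((H.U.filter fun u => u.2 = T).card : ℝ) - 1) :=
      mul_nonneg (by linarith) (by linarith)
    have e2 : (0:ℝ) ≤ ((Δ : ℝ) - (δ : ℝ)) * ((H.U.filter fun u => u.2 = T).card : ℝ) :=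
      mul_nonneg (by linarith) (by linarith)
    nlinarith [e1, e2]
  nlinarith [hexpK, hexpW, hgR, h3]
end
end

section
/- Let j := ⌊Δ/2 + 1⌋ and assume j ≤ δ. Fix any function L : V×ℕ≥1 → [0,1], any ε ∈ [0,1] and any initial configuration ξ ∈ {0,1}^V. Let χ be the j-threshold Consensus Process with noise set N_ε = {(x,t) : L_x(t) < ε} started from ξ, and let σ be the ε-noise Majority Vote Process driven by the same L started from ξ. Then χ_x(t) ≤ σ_x(t) for every x ∈ V and every t ∈ ℕ. -/
open Classical
noncomputable section

namespace Paper

/-- The `ε`-noise Majority Vote Process driven by the values `L : V × ℕ≥1 → [0,1]`. -/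
noncomputable def majorityVote {V : Type*} (G : SimpleGraph V) [DecidableRel G.Adj]
    [∀ v, Fintype (G.neighborSet v)] (ε : ℝ) (L : V × ℕ → ℝ) (ξ : V → Bool) :
    ℕ → V → Bool
  | 0 => ξ
  | t + 1 => fun x =>
      if L (x, t + 1) < ε / 2 then false
      else if L (x, t + 1) < ε then true
      else if (cCount G (majorityVote G ε L ξ t) x : ℝ) < (G.degree x : ℝ) / 2 then false
      else if (G.degree x : ℝ) / 2 < (cCount G (majorityVote G ε L ξ t) x : ℝ) then true
      else majorityVote G ε L ξ t x

end Paper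

open Paper in
/-- pathwise domination of the `⌊Δ/2 + 1⌋`-threshold Consensus Process by the
`ε`-noise Majority Vote Process driven by the same uniform values `L`. -/
theorem consensus_le_majorityVote
    {V : Type*} [Infinite V]
    (G : SimpleGraph V) [DecidableRel G.Adj] [∀ v, Fintype (G.neighborSet v)]
    (hconn : G.Connected)
    (Δ : ℕ) (hΔ : IsLUB (Set.range fun x => G.degree x) Δ)
    (hjδ : ∀ x, Δ / 2 + 1 ≤ G.degree x)
    (L : V × ℕ → ℝ) (ε : ℝ) (hε0 : 0 ≤ ε) (hε1 : ε ≤ 1) (ξ : V → Bool)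
    (x : V) (t : ℕ) :
    consensus G (Δ / 2 + 1) {p : V × ℕ | 1 ≤ p.2 ∧ L p < ε} ξ t x ≤
      majorityVote G ε L ξ t x := by
  induction t generalizing x with
  | zero => exact le_refl _
  | succ t ih =>
    have mono : ∀ y, cCount G (consensus G (Δ / 2 + 1) {p : V × ℕ | 1 ≤ p.2 ∧ L p < ε} ξ t) y
        ≤ cCount G (majorityVote G ε L ξ t) y := by
      intro y
      apply Finset.card_le_card
      intro z hz
      simp only [Finset.mem_filter] at hz ⊢
      exact ⟨hz.1, le_antisymm (Bool.le_true _) (hz.2 ▸ ih z)⟩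
    simp only [consensus, majorityVote]
    by_cases hN : L (x, t+1) < ε
    · rw [if_pos (by exact ⟨Nat.le_add_left 1 t, hN⟩)]
      exact Bool.false_le _
    · rw [if_neg (by intro h; exact hN h.2)]
      push_neg at hN
      by_cases hc : Δ / 2 + 1 ≤ cCount G (consensus G (Δ / 2 + 1) {p : V × ℕ | 1 ≤ p.2 ∧ L p < ε} ξ t) x
      · have h2 : Δ / 2 + 1 ≤ cCount G (majorityVote G ε L ξ t) x := le_trans hc (mono x)
        have hdeg : G.degree x ≤ Δ := hΔ.1 ⟨x, rfl⟩
        have hlt : (G.degree x : ℝ) / 2 < (cCount G (majorityVote G ε L ξ t) x : ℝ) := by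
          have hn : G.degree x < 2 * cCount G (majorityVote G ε L ξ t) x := by omega
          have := (Nat.cast_lt (α := ℝ)).mpr hn
          push_cast at this
          linarith
        rw [if_neg (not_lt.mpr (le_trans (by linarith) hN)), if_neg (not_lt.mpr hN),
          if_neg (not_lt.mpr hlt.le), if_pos hlt]
        exact Bool.le_true _
      · simp [hc]
end
end
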